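/- Existence of the inserted particle value: Let f be C^2 with f'' > 0, let x2 < x23 < x3 and u2 ≤ u3. Then there exists u23 ∈ [u2, u3] such that (x23 − x2)·a(u2,u23) + (x3 − x23)·a(u23,u3) = (x3 − x2)·a(u2,u3). -/

import Mathlib

noncomputable def nlAvgExt (f : ℝ → ℝ) (u1 u2 : ℝ) : ℝ :=
  if u1 = u2 then u1 else
    (∫ u in u1..u2, deriv (deriv f) u * u) / (∫ u in u1..u2, deriv (deriv f) u)

open Set intervalIntegral

lemma gcont (f : ℝ → ℝ) (hf : ContDiff ℝ 2 f) : Continuous (deriv (deriv f)) := by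
  have h2 : ContDiff ℝ ((0 + 2 : ℕ) : ℕ∞) f := by exact_mod_cast hf
  have := (ContDiff.iterate_deriv' 0 2 h2).continuous
  simpa [Function.iterate_succ, Function.comp] using this

/-- the weighted average lies between its endpoints -/
lemma avg_mem (f : ℝ → ℝ) (hf : ContDiff ℝ 2 f) (u2 u3 : ℝ)
    (hconv : ∀ u ∈ Set.Icc u2 u3, 0 < deriv (deriv f) u)
    {s t : ℝ} (hs : u2 ≤ s) (hst : s ≤ t) (ht : t ≤ u3) :
    nlAvgExt f s t ∈ Set.Icc s t := by
  set g := deriv (deriv f) with hg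
  have hgc : Continuous g := gcont f hf
  rcases eq_or_lt_of_le hst with rfl | hlt
  · simp [nlAvgExt]
  have hne : s ≠ t := ne_of_lt hlt
  have hint1 : IntervalIntegrable g MeasureTheory.volume s t := hgc.intervalIntegrable s t
  have hint2 : IntervalIntegrable (fun u => g u * u) MeasureTheory.volume s t :=
    (hgc.mul continuous_id).intervalIntegrable s t
  have hBpos : 0 < ∫ u in s..t, g u := by
    apply intervalIntegral_pos_of_pos_on hint1 _ hlt
    intro x hx
    exact hconv x ⟨le_trans hs hx.1.le, le_trans hx.2.le ht⟩
  have hlow : s * ∫ u in s..t, g u ≤ ∫ u in s..t, g u * u := by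
    rw [← intervalIntegral.integral_const_mul]
    apply intervalIntegral.integral_mono_on hst (hint1.const_mul s) hint2
    intro x hx
    have hgx : 0 ≤ g x := (hconv x ⟨le_trans hs hx.1, le_trans hx.2 ht⟩).le
    rw [mul_comm (g x) x]
    exact mul_le_mul_of_nonneg_right hx.1 hgx
  have hhigh : (∫ u in s..t, g u * u) ≤ t * ∫ u in s..t, g u := by
    rw [← intervalIntegral.integral_const_mul]
    apply intervalIntegral.integral_mono_on hst hint2 (hint1.const_mul t)
    intro x hx
    have hgx : 0 ≤ g x := (hconv x ⟨le_trans hs hx.1, le_trans hx.2 ht⟩).le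
    rw [mul_comm (g x) x]
    exact mul_le_mul_of_nonneg_right hx.2 hgx
  rw [nlAvgExt, if_neg hne]
  constructor
  · rw [le_div_iff₀ hBpos]; exact hlow
  · rw [div_le_iff₀ hBpos]; exact hhigh

lemma h1_contOn (f : ℝ → ℝ) (hf : ContDiff ℝ 2 f) (u2 u3 : ℝ)
    (hconv : ∀ u ∈ Set.Icc u2 u3, 0 < deriv (deriv f) u) :
    ContinuousOn (fun t => nlAvgExt f u2 t) (Set.Icc u2 u3) := by
  set g := deriv (deriv f) with hg
  have hgc : Continuous g := gcont f hf
  have hintall : ∀ a b : ℝ, IntervalIntegrable g MeasureTheory.volume a b :=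
    fun a b => hgc.intervalIntegrable a b
  have hintall2 : ∀ a b : ℝ, IntervalIntegrable (fun u => g u * u) MeasureTheory.volume a b :=
    fun a b => (hgc.mul continuous_id).intervalIntegrable a b
  have hA : Continuous (fun t => ∫ u in u2..t, g u * u) :=
    intervalIntegral.continuous_primitive hintall2 u2
  have hB : Continuous (fun t => ∫ u in u2..t, g u) :=
    intervalIntegral.continuous_primitive hintall u2
  intro t0 ht0
  rcases eq_or_lt_of_le ht0.1 with rfl | hlt
  · -- continuity at left endpoint by squeeze
    rw [ContinuousWithinAt]
    have hval : nlAvgExt f u2 u2 = u2 := by simp [nlAvgExt]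
    rw [hval]
    apply tendsto_of_tendsto_of_tendsto_of_le_of_le'
        (tendsto_const_nhds) (tendsto_nhdsWithin_of_tendsto_nhds Filter.tendsto_id)
    · filter_upwards [self_mem_nhdsWithin] with x hx
      exact (avg_mem f hf u2 u3 hconv le_rfl hx.1 hx.2).1
    · filter_upwards [self_mem_nhdsWithin] with x hx
      exact (avg_mem f hf u2 u3 hconv le_rfl hx.1 hx.2).2
  · -- continuity at interior points: equals A/B near t0
    have hBpos : 0 < ∫ u in u2..t0, g u := by
      apply intervalIntegral_pos_of_pos_on (hintall u2 t0) _ hlt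
      intro x hx
      exact hconv x ⟨hx.1.le, le_trans hx.2.le ht0.2⟩
    have hcont : ContinuousAt
        (fun t => (∫ u in u2..t, g u * u) / (∫ u in u2..t, g u)) t0 :=
      (hA.continuousAt).div (hB.continuousAt) (ne_of_gt hBpos)
    apply hcont.continuousWithinAt.congr_of_eventuallyEq
    · filter_upwards [nhdsWithin_le_nhds (Ioi_mem_nhds hlt)] with x hx
      rw [nlAvgExt, if_neg (ne_of_lt (Set.mem_Ioi.mp hx))]
    · rw [nlAvgExt, if_neg (ne_of_lt hlt)]

lemma h2_contOn (f : ℝ → ℝ) (hf : ContDiff ℝ 2 f) (u2 u3 : ℝ)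
    (hconv : ∀ u ∈ Set.Icc u2 u3, 0 < deriv (deriv f) u) :
    ContinuousOn (fun t => nlAvgExt f t u3) (Set.Icc u2 u3) := by
  set g := deriv (deriv f) with hg
  have hgc : Continuous g := gcont f hf
  have hintall : ∀ a b : ℝ, IntervalIntegrable g MeasureTheory.volume a b :=
    fun a b => hgc.intervalIntegrable a b
  have hintall2 : ∀ a b : ℝ, IntervalIntegrable (fun u => g u * u) MeasureTheory.volume a b :=
    fun a b => (hgc.mul continuous_id).intervalIntegrable a b
  have hA : Continuous (fun t => ∫ u in t..u3, g u * u) := by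
    have : Continuous (fun t => ∫ u in u3..t, g u * u) :=
      intervalIntegral.continuous_primitive hintall2 u3
    have heq : (fun t => ∫ u in t..u3, g u * u) = fun t => -∫ u in u3..t, g u * u := by
      funext t; rw [intervalIntegral.integral_symm]
    rw [heq]; exact this.neg
  have hB : Continuous (fun t => ∫ u in t..u3, g u) := by
    have : Continuous (fun t => ∫ u in u3..t, g u) :=
      intervalIntegral.continuous_primitive hintall u3
    have heq : (fun t => ∫ u in t..u3, g u) = fun t => -∫ u in u3..t, g u := by
      funext t; rw [intervalIntegral.integral_symm]
    rw [heq]; exact this.neg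
  intro t0 ht0
  rcases eq_or_lt_of_le ht0.2 with rfl | hlt
  · rw [ContinuousWithinAt]
    have hval : nlAvgExt f t0 t0 = t0 := by simp [nlAvgExt]
    rw [hval]
    apply tendsto_of_tendsto_of_tendsto_of_le_of_le'
        (tendsto_nhdsWithin_of_tendsto_nhds Filter.tendsto_id) (tendsto_const_nhds)
    · filter_upwards [self_mem_nhdsWithin] with x hx
      exact (avg_mem f hf u2 t0 hconv hx.1 hx.2 le_rfl).1
    · filter_upwards [self_mem_nhdsWithin] with x hx
      exact (avg_mem f hf u2 t0 hconv hx.1 hx.2 le_rfl).2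
  · have hBpos : 0 < ∫ u in t0..u3, g u := by
      apply intervalIntegral_pos_of_pos_on (hintall t0 u3) _ hlt
      intro x hx
      exact hconv x ⟨le_trans ht0.1 hx.1.le, hx.2.le⟩
    have hcont : ContinuousAt
        (fun t => (∫ u in t..u3, g u * u) / (∫ u in t..u3, g u)) t0 :=
      (hA.continuousAt).div (hB.continuousAt) (ne_of_gt hBpos)
    apply hcont.continuousWithinAt.congr_of_eventuallyEq
    · filter_upwards [nhdsWithin_le_nhds (Iio_mem_nhds hlt)] with x hx
      rw [nlAvgExt, if_neg (ne_of_lt (Set.mem_Iio.mp hx))]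
    · rw [nlAvgExt, if_neg (ne_of_lt hlt)]

theorem insert_value_exists (f : ℝ → ℝ) (hf : ContDiff ℝ 2 f)
    (u2 u3 : ℝ) (hu : u2 ≤ u3)
    (hconv : ∀ u ∈ Set.Icc u2 u3, 0 < deriv (deriv f) u)
    (x2 x23 x3 : ℝ) (hx2 : x2 < x23) (hx3 : x23 < x3) :
    ∃ u23 ∈ Set.Icc u2 u3,
      (x23 - x2) * nlAvgExt f u2 u23 + (x3 - x23) * nlAvgExt f u23 u3
        = (x3 - x2) * nlAvgExt f u2 u3 := by
  set F : ℝ → ℝ := fun t => (x23 - x2) * nlAvgExt f u2 t + (x3 - x23) * nlAvgExt f t u3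
    with hF
  have hFcont : ContinuousOn F (Set.Icc u2 u3) :=
    (continuousOn_const.mul (h1_contOn f hf u2 u3 hconv)).add
      (continuousOn_const.mul (h2_contOn f hf u2 u3 hconv))
  set a23 := nlAvgExt f u2 u3 with ha23
  have ha : a23 ∈ Set.Icc u2 u3 := avg_mem f hf u2 u3 hconv le_rfl hu le_rfl
  have hself2 : nlAvgExt f u2 u2 = u2 := by simp [nlAvgExt]
  have hself3 : nlAvgExt f u3 u3 = u3 := by simp [nlAvgExt]
  have hFu2 : F u2 = (x23 - x2) * u2 + (x3 - x23) * a23 := by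
    simp [hF, hself2, ha23]
  have hFu3 : F u3 = (x23 - x2) * a23 + (x3 - x23) * u3 := by
    simp [hF, hself3, ha23]
  set y := (x3 - x2) * a23 with hy
  have hmem : y ∈ Set.Icc (F u2) (F u3) := by
    constructor
    · rw [hFu2, hy]
      nlinarith [ha.1, ha.2]
    · rw [hFu3, hy]
      nlinarith [ha.1, ha.2]
  have := intermediate_value_Icc hu hFcont hmem
  obtain ⟨t, ht, hFt⟩ := this
  exact ⟨t, ht, hFt⟩
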